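/- Let 0 < s < 1, N ≥ 1, and m(x) = min(1, N^{1-s} x^{s-1}) for x > 0. Suppose k₁,…,k₆ ∈ ℝ satisfy |k₁ + k₂| ≤ A, |k₃ + k₄| ≤ A, and |k₅|, |k₆| ≤ A, where A ≤ max(|k₁|,…,|k₆|) =: N₁*. Then |m(k₁)²k₁² − m(k₂)²k₂² + m(k₃)²k₃² − m(k₄)²k₄² + m(k₅)²k₅² − m(k₆)²k₆²| ≤ C · m(N₁*)·N₁* · m(A)·A for an absolute constant C. -/

import Mathlib

/-- Six-term multiplier bound: if `|k₁+k₂| ≤ A`, `|k₃+k₄| ≤ A`, `|k₅|,|k₆| ≤ A` with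
`A ≤ N₁* := max_j |k_j|`, then the alternating sum of `m(k_j)²k_j²` is bounded by
`C·m(N₁*)N₁*·m(A)A`. -/
theorem stmt9 :
    ∃ C : ℝ, 0 < C ∧ ∀ (N s : ℝ), 1 ≤ N → 0 < s → s < 1 →
      ∀ k₁ k₂ k₃ k₄ k₅ k₆ A : ℝ,
        |k₁ + k₂| ≤ A → |k₃ + k₄| ≤ A → |k₅| ≤ A → |k₆| ≤ A →
        A ≤ max |k₁| (max |k₂| (max |k₃| (max |k₄| (max |k₅| |k₆|)))) →
        (let m : ℝ → ℝ := fun x => if x = 0 then 1 else min 1 (N ^ (1 - s) * |x| ^ (s - 1))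
         let N₁ := max |k₁| (max |k₂| (max |k₃| (max |k₄| (max |k₅| |k₆|))))
        |m k₁ ^ 2 * k₁ ^ 2 - m k₂ ^ 2 * k₂ ^ 2 + m k₃ ^ 2 * k₃ ^ 2 - m k₄ ^ 2 * k₄ ^ 2 +
            m k₅ ^ 2 * k₅ ^ 2 - m k₆ ^ 2 * k₆ ^ 2|
          ≤ C * (m N₁ * N₁) * (m A * A)) := by
  refine ⟨6, by norm_num, ?_⟩
  intro N s hN hs0 hs1 k₁ k₂ k₃ k₄ k₅ k₆ A h12 h34 h5 h6 hA
  intro m N₁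
  have hN0 : (0:ℝ) < N := lt_of_lt_of_le one_pos hN
  set c : ℝ := N ^ (1 - s) with hcdef
  have hc1 : (1:ℝ) ≤ c := Real.one_le_rpow hN (by linarith)
  have hc0 : (0:ℝ) ≤ c := le_trans zero_le_one hc1
  set g : ℝ → ℝ := fun x => min x (c * x ^ s) with hgdef
  -- g is nonnegative on [0,∞)
  have hgnn : ∀ x : ℝ, 0 ≤ x → 0 ≤ g x := fun x hx =>
    le_min hx (mul_nonneg hc0 (Real.rpow_nonneg hx s))
  -- g is monotone on [0,∞)
  have hgmono : ∀ a b : ℝ, 0 ≤ a → a ≤ b → g a ≤ g b := fun a b ha hab =>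
    min_le_min hab (mul_le_mul_of_nonneg_left (Real.rpow_le_rpow ha hab hs0.le) hc0)
  -- m x * |x| = g |x|
  have hmg : ∀ x : ℝ, m x * |x| = g |x| := by
    intro x
    by_cases hx : x = 0
    · simp [hx, m, g, Real.zero_rpow (ne_of_gt hs0)]
    · have hax : (0:ℝ) < |x| := abs_pos.mpr hx
      simp only [m, g, if_neg hx]
      rw [min_mul_of_nonneg _ _ hax.le, one_mul, mul_assoc,
        ← Real.rpow_add_one (ne_of_gt hax)]
      ring_nf
      rw [hcdef, mul_comm]
  -- the key pointwise identity : m x ^ 2 * x ^ 2 = (g |x|)^2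
  have hm2 : ∀ x : ℝ, m x ^ 2 * x ^ 2 = g |x| ^ 2 := by
    intro x
    rw [← hmg x, mul_pow, sq_abs]
  -- subadditivity of rpow for exponent in [0,1]
  have hrsub : ∀ a b : ℝ, 0 ≤ a → 0 ≤ b → (a + b) ^ s ≤ a ^ s + b ^ s := by
    intro a b ha hb
    have h := NNReal.rpow_add_le_add_rpow a.toNNReal b.toNNReal hs0.le hs1.le
    have h' := NNReal.coe_le_coe.mpr h
    push_cast at h'
    rwa [Real.coe_toNNReal a ha, Real.coe_toNNReal b hb] at h'
  -- key step for the mixed case, via Bernoulli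
  have hkey : ∀ a b : ℝ, 0 ≤ a → 0 ≤ b → c * b ^ s ≤ b → g (a + b) ≤ a + c * b ^ s := by
    intro a b ha hb hbc
    rcases eq_or_lt_of_le hb with hb0 | hb0
    · rw [← hb0, add_zero]
      calc g a ≤ a := min_le_left _ _
        _ ≤ a + c * (0:ℝ) ^ s := by
            rw [Real.zero_rpow (ne_of_gt hs0)]; simp
    · -- Bernoulli : (a+b)^s = b^s (1 + a/b)^s ≤ b^s (1 + s (a/b))
      have hber : (1 + a / b) ^ s ≤ 1 + s * (a / b) :=
        rpow_one_add_le_one_add_mul_self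
          (le_trans (by norm_num : (-1:ℝ) ≤ 0) (by positivity)) hs0.le hs1.le
      have hab : (a + b) ^ s = b ^ s * (1 + a / b) ^ s := by
        rw [← Real.mul_rpow hb0.le (by positivity)]
        congr 1
        field_simp
        ring
      have hbs1 : c * b ^ s ≤ b * 1 := by simpa using hbc
      have h1 : c * (a + b) ^ s ≤ c * b ^ s + (c * b ^ s) * (s * (a / b)) := by
        rw [hab]
        calc c * (b ^ s * (1 + a / b) ^ s)
            ≤ c * (b ^ s * (1 + s * (a / b))) := by
              apply mul_le_mul_of_nonneg_left _ hc0
              exact mul_le_mul_of_nonneg_left hber (Real.rpow_nonneg hb s)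
          _ = c * b ^ s + (c * b ^ s) * (s * (a / b)) := by ring
      have h2 : (c * b ^ s) * (s * (a / b)) ≤ a := by
        have hs' : s * (a / b) ≤ a / b :=
          (mul_le_mul_of_nonneg_right hs1.le (by positivity)).trans_eq (one_mul _)
        calc (c * b ^ s) * (s * (a / b)) ≤ b * (a / b) :=
              mul_le_mul (by linarith) hs' (by positivity) hb0.le
          _ = a := by field_simp
      calc g (a + b) ≤ c * (a + b) ^ s := min_le_right _ _
        _ ≤ c * b ^ s + (c * b ^ s) * (s * (a / b)) := h1
        _ ≤ a + c * b ^ s := by linarith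
  -- subadditivity of g
  have hgsub : ∀ a b : ℝ, 0 ≤ a → 0 ≤ b → g (a + b) ≤ g a + g b := by
    intro a b ha hb
    rcases le_total (c * a ^ s) a with hca | hca
    · rcases le_total (c * b ^ s) b with hcb | hcb
      · -- both powers small: use rpow subadditivity
        have : g a + g b = c * a ^ s + c * b ^ s := by
          rw [hgdef]; simp only
          rw [min_eq_right hca, min_eq_right hcb]
        rw [this]
        calc g (a + b) ≤ c * (a + b) ^ s := min_le_right _ _
          _ ≤ c * (a ^ s + b ^ s) :=
              mul_le_mul_of_nonneg_left (hrsub a b ha hb) hc0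
          _ = c * a ^ s + c * b ^ s := by ring
      · -- c*a^s ≤ a, b ≤ c*b^s : g b = b, use key with roles swapped
        have hgb : g b = b := min_eq_left hcb
        have := hkey b a hb ha hca
        rw [add_comm b a] at this
        have hga : g a = c * a ^ s := min_eq_right hca
        rw [hga, hgb]; linarith
    · -- a ≤ c*a^s : g a = a
      have hga : g a = a := min_eq_left hca
      rcases le_total (c * b ^ s) b with hcb | hcb
      · have hgb : g b = c * b ^ s := min_eq_right hcb
        rw [hga, hgb]
        exact hkey a b ha hb hcb
      · have hgb : g b = b := min_eq_left hcb
        rw [hga, hgb]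
        exact min_le_left _ _
  -- difference bound: |g x - g y| ≤ g d whenever ||x| - |y|| ≤ d, x,y ≥ 0
  have hdiff : ∀ x y d : ℝ, 0 ≤ x → 0 ≤ y → |x - y| ≤ d → |g x - g y| ≤ g d := by
    intro x y d hx hy hd
    have hd0 : 0 ≤ d := le_trans (abs_nonneg _) hd
    rcases le_total y x with hxy | hxy
    · have h1 : x - y ≤ d := le_trans (le_abs_self _) hd
      have h2 : g x ≤ g y + g (x - y) := by
        have := hgsub y (x - y) hy (by linarith)
        rwa [add_sub_cancel] at this
      have h3 : g (x - y) ≤ g d := hgmono _ _ (by linarith) h1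
      have h4 : 0 ≤ g x - g y ∨ True := Or.inr trivial
      rw [abs_sub_le_iff]
      constructor
      · linarith
      · have := hgmono y x hy hxy
        have := hgnn d hd0
        linarith
    · have h1 : y - x ≤ d := by
        rw [abs_sub_comm] at hd
        exact le_trans (le_abs_self _) hd
      have h2 : g y ≤ g x + g (y - x) := by
        have := hgsub x (y - x) hx (by linarith)
        rwa [add_sub_cancel] at this
      have h3 : g (y - x) ≤ g d := hgmono _ _ (by linarith) h1
      rw [abs_sub_le_iff]
      constructor
      · have := hgmono x y hx hxy
        have := hgnn d hd0
        linarith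
      · linarith
  -- basic positivity facts
  have hA0 : 0 ≤ A := le_trans (abs_nonneg _) h5
  have hN₁0 : 0 ≤ N₁ := le_trans hA0 hA
  -- each |kⱼ| ≤ N₁
  have hk1 : |k₁| ≤ N₁ := le_max_left _ _
  have hk2 : |k₂| ≤ N₁ := le_trans (le_max_left _ _) (le_max_right _ _)
  have hk3 : |k₃| ≤ N₁ :=
    le_trans (le_trans (le_max_left _ _) (le_max_right _ _)) (le_max_right _ _)
  have hk4 : |k₄| ≤ N₁ :=
    le_trans (le_trans (le_trans (le_max_left _ _) (le_max_right _ _)) (le_max_right _ _))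
      (le_max_right _ _)
  have hk5 : |k₅| ≤ N₁ :=
    le_trans (le_trans (le_trans (le_trans (le_max_left _ _) (le_max_right _ _))
      (le_max_right _ _)) (le_max_right _ _)) (le_max_right _ _)
  have hk6 : |k₆| ≤ N₁ :=
    le_trans (le_trans (le_trans (le_trans (le_max_right _ _) (le_max_right _ _))
      (le_max_right _ _)) (le_max_right _ _)) (le_max_right _ _)
  -- g values at the various points
  have hgA : 0 ≤ g A := hgnn A hA0
  have hgN₁ : 0 ≤ g N₁ := hgnn N₁ hN₁0
  -- pair bound
  have hpair : ∀ x y : ℝ, |x + y| ≤ A → |x| ≤ N₁ → |y| ≤ N₁ →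
      |g |x| ^ 2 - g |y| ^ 2| ≤ 2 * (g N₁ * g A) := by
    intro x y hxy hx hy
    have habs : abs (|x| - |y|) ≤ A := by
      calc abs (|x| - |y|) = abs (|x| - |(-y)|) := by rw [abs_neg]
        _ ≤ |x - -y| := abs_abs_sub_abs_le_abs_sub x (-y)
        _ = |x + y| := by rw [sub_neg_eq_add]
        _ ≤ A := hxy
    have h1 : abs (g |x| - g |y|) ≤ g A := hdiff _ _ _ (abs_nonneg x) (abs_nonneg y) habs
    have hgx : 0 ≤ g |x| := hgnn _ (abs_nonneg x)
    have hgy : 0 ≤ g |y| := hgnn _ (abs_nonneg y)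
    have hgxN : g |x| ≤ g N₁ := hgmono _ _ (abs_nonneg x) hx
    have hgyN : g |y| ≤ g N₁ := hgmono _ _ (abs_nonneg y) hy
    calc |g |x| ^ 2 - g |y| ^ 2| = abs (g |x| - g |y|) * abs (g |x| + g |y|) := by
          rw [← abs_mul]; congr 1; ring
      _ ≤ g A * (2 * g N₁) := by
          apply mul_le_mul h1 _ (abs_nonneg _) hgA
          rw [abs_of_nonneg (by linarith)]
          linarith
      _ = 2 * (g N₁ * g A) := by ring
  -- single term bound
  have hsingle : ∀ x : ℝ, |x| ≤ A → |x| ≤ N₁ → g |x| ^ 2 ≤ g N₁ * g A := by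
    intro x hxA hxN
    have hgx : 0 ≤ g |x| := hgnn _ (abs_nonneg x)
    have h1 : g |x| ≤ g A := hgmono _ _ (abs_nonneg x) hxA
    have h2 : g |x| ≤ g N₁ := hgmono _ _ (abs_nonneg x) hxN
    calc g |x| ^ 2 = g |x| * g |x| := sq (g |x|)
      _ ≤ g N₁ * g A := mul_le_mul h2 h1 hgx hgN₁
  -- now put it together
  have hRHS : (6:ℝ) * (m N₁ * N₁) * (m A * A) = 6 * (g N₁ * g A) := by
    have h1 : m N₁ * N₁ = g N₁ := by
      have := hmg N₁; rwa [abs_of_nonneg hN₁0] at this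
    have h2 : m A * A = g A := by
      have := hmg A; rwa [abs_of_nonneg hA0] at this
    rw [h1, h2]; ring
  rw [hRHS, hm2 k₁, hm2 k₂, hm2 k₃, hm2 k₄, hm2 k₅, hm2 k₆]
  have b12 := hpair k₁ k₂ h12 hk1 hk2
  have b34 := hpair k₃ k₄ h34 hk3 hk4
  have b5 := hsingle k₅ h5 hk5
  have b6 := hsingle k₆ h6 hk6
  have hg5 : 0 ≤ g |k₅| ^ 2 := sq_nonneg _
  have hg6 : 0 ≤ g |k₆| ^ 2 := sq_nonneg _
  calc |g |k₁| ^ 2 - g |k₂| ^ 2 + g |k₃| ^ 2 - g |k₄| ^ 2 + g |k₅| ^ 2 - g |k₆| ^ 2|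
      ≤ |g |k₁| ^ 2 - g |k₂| ^ 2| + |g |k₃| ^ 2 - g |k₄| ^ 2| + g |k₅| ^ 2 + g |k₆| ^ 2 := by
        have h5' : |g |k₅| ^ 2| = g |k₅| ^ 2 := abs_of_nonneg hg5
        have h6' : |g |k₆| ^ 2| = g |k₆| ^ 2 := abs_of_nonneg hg6
        calc |g |k₁| ^ 2 - g |k₂| ^ 2 + g |k₃| ^ 2 - g |k₄| ^ 2 + g |k₅| ^ 2 - g |k₆| ^ 2|
            ≤ |g |k₁| ^ 2 - g |k₂| ^ 2 + g |k₃| ^ 2 - g |k₄| ^ 2 + g |k₅| ^ 2| + |g |k₆| ^ 2| :=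
              abs_sub _ _
          _ ≤ |g |k₁| ^ 2 - g |k₂| ^ 2 + g |k₃| ^ 2 - g |k₄| ^ 2| + |g |k₅| ^ 2| + |g |k₆| ^ 2| := by
              have := abs_add_le (g |k₁| ^ 2 - g |k₂| ^ 2 + g |k₃| ^ 2 - g |k₄| ^ 2) (g |k₅| ^ 2)
              linarith
          _ ≤ |g |k₁| ^ 2 - g |k₂| ^ 2| + |g |k₃| ^ 2 - g |k₄| ^ 2| + |g |k₅| ^ 2| + |g |k₆| ^ 2| := by
              have := abs_add_le (g |k₁| ^ 2 - g |k₂| ^ 2) (g |k₃| ^ 2 - g |k₄| ^ 2)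
              have h' : g |k₁| ^ 2 - g |k₂| ^ 2 + g |k₃| ^ 2 - g |k₄| ^ 2
                  = (g |k₁| ^ 2 - g |k₂| ^ 2) + (g |k₃| ^ 2 - g |k₄| ^ 2) := by ring
              rw [h']
              linarith
          _ = |g |k₁| ^ 2 - g |k₂| ^ 2| + |g |k₃| ^ 2 - g |k₄| ^ 2| + g |k₅| ^ 2 + g |k₆| ^ 2 := by
              rw [h5', h6']
    _ ≤ 6 * (g N₁ * g A) := by linarith
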